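/- If μ is a nonzero constant, λ : ℝ³ → ℝ is C¹, and u : ℝ³ → ℝ³ is a C³ solution of the Lamé system μ Δu + (μ + λ) ∇(div u) + (div u) ∇λ = 0 on an open set Ω, then each component of curl u is harmonic on Ω, i.e., Δ(curl u) = 0 on Ω. -/

import Mathlib

open MeasureTheory Metric Set

noncomputable def pd (i : Fin 3) (f : (Fin 3 → ℝ) → ℝ) (x : Fin 3 → ℝ) : ℝ :=
  fderiv ℝ f x (Pi.single i 1)

noncomputable def grad (f : (Fin 3 → ℝ) → ℝ) (x : Fin 3 → ℝ) : Fin 3 → ℝ :=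
  fun i => pd i f x

noncomputable def vdiv (u : (Fin 3 → ℝ) → Fin 3 → ℝ) (x : Fin 3 → ℝ) : ℝ :=
  ∑ i, pd i (fun y => u y i) x

noncomputable def curl (u : (Fin 3 → ℝ) → Fin 3 → ℝ) (x : Fin 3 → ℝ) : Fin 3 → ℝ :=
  ![pd 1 (fun y => u y 2) x - pd 2 (fun y => u y 1) x,
    pd 2 (fun y => u y 0) x - pd 0 (fun y => u y 2) x,
    pd 0 (fun y => u y 1) x - pd 1 (fun y => u y 0) x]

noncomputable def lap (f : (Fin 3 → ℝ) → ℝ) (x : Fin 3 → ℝ) : ℝ :=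
  ∑ i, pd i (pd i f) x

noncomputable def lapV (u : (Fin 3 → ℝ) → Fin 3 → ℝ) (x : Fin 3 → ℝ) : Fin 3 → ℝ :=
  fun i => lap (fun y => u y i) x

lemma pd_congr {f g : (Fin 3 → ℝ) → ℝ} {s : Set (Fin 3 → ℝ)} (hs : IsOpen s)
    {x : Fin 3 → ℝ} (hx : x ∈ s) (h : ∀ y ∈ s, f y = g y) (i : Fin 3) :
    pd i f x = pd i g x := by
  unfold pd
  rw [Filter.EventuallyEq.fderiv_eq (Filter.eventuallyEq_of_mem (hs.mem_nhds hx) h)]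

lemma pd_sub {f g : (Fin 3 → ℝ) → ℝ} {x : Fin 3 → ℝ}
    (hf : DifferentiableAt ℝ f x) (hg : DifferentiableAt ℝ g x) (i : Fin 3) :
    pd i (fun y => f y - g y) x = pd i f x - pd i g x := by
  unfold pd; rw [fderiv_fun_sub hf hg]; rfl

lemma pd_const_mul {g : (Fin 3 → ℝ) → ℝ} {x : Fin 3 → ℝ}
    (hg : DifferentiableAt ℝ g x) (c : ℝ) (i : Fin 3) :
    pd i (fun y => c * g y) x = c * pd i g x := by
  unfold pd; rw [fderiv_const_mul hg c]; rfl

lemma pd_neg {g : (Fin 3 → ℝ) → ℝ} {x : Fin 3 → ℝ} (i : Fin 3) :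
    pd i (fun y => -(g y)) x = -(pd i g x) := by
  unfold pd; rw [fderiv_fun_neg]; rfl

lemma pd_sum {g : Fin 3 → (Fin 3 → ℝ) → ℝ} {x : Fin 3 → ℝ}
    (hg : ∀ k, DifferentiableAt ℝ (g k) x) (i : Fin 3) :
    pd i (fun y => ∑ k, g k y) x = ∑ k, pd i (g k) x := by
  unfold pd; rw [fderiv_fun_sum (fun k _ => hg k)]; simp

lemma pd_mul {f g : (Fin 3 → ℝ) → ℝ} {x : Fin 3 → ℝ}
    (hf : DifferentiableAt ℝ f x) (hg : DifferentiableAt ℝ g x) (i : Fin 3) :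
    pd i (fun y => f y * g y) x = f x * pd i g x + g x * pd i f x := by
  unfold pd; rw [fderiv_fun_mul hf hg]; rfl

lemma contDiffOn_pd {n : ℕ} {f : (Fin 3 → ℝ) → ℝ} {s : Set (Fin 3 → ℝ)}
    (hs : IsOpen s) (hf : ContDiffOn ℝ (n + 1) f s) (i : Fin 3) :
    ContDiffOn ℝ n (pd i f) s := by
  have h : ContDiffOn ℝ n (fderiv ℝ f) s := hf.fderiv_of_isOpen hs (by norm_cast)
  exact h.clm_apply contDiffOn_const

lemma pd_comm {f : (Fin 3 → ℝ) → ℝ} {x : Fin 3 → ℝ}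
    (hf : ContDiffAt ℝ 2 f x) (i j : Fin 3) :
    pd i (pd j f) x = pd j (pd i f) x := by
  have hsymm := hf.isSymmSndFDerivAt (by simp)
  have hdiff : DifferentiableAt ℝ (fderiv ℝ f) x :=
    (hf.fderiv_right (m := 1) (by norm_num)).differentiableAt one_ne_zero
  have key : ∀ a b : Fin 3,
      pd a (pd b f) x = fderiv ℝ (fderiv ℝ f) x (Pi.single a 1) (Pi.single b 1) := by
    intro a b
    show fderiv ℝ (fun y => (fderiv ℝ f y) (Pi.single b 1)) x (Pi.single a 1) = _
    rw [fderiv_clm_apply hdiff (differentiableAt_const _)]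
    simp
  rw [key i j, key j i, hsymm]

lemma diffAt_of_contDiffOn {n : ℕ} {f : (Fin 3 → ℝ) → ℝ} {s : Set (Fin 3 → ℝ)}
    (hs : IsOpen s) (hf : ContDiffOn ℝ (n + 1) f s) {x : Fin 3 → ℝ} (hx : x ∈ s) :
    DifferentiableAt ℝ f x :=
  (hf.contDiffAt (hs.mem_nhds hx)).differentiableAt (by simp)

lemma lap_sub {f g : (Fin 3 → ℝ) → ℝ} {s : Set (Fin 3 → ℝ)} (hs : IsOpen s)
    {x : Fin 3 → ℝ} (hx : x ∈ s)
    (hf : ContDiffOn ℝ 2 f s) (hg : ContDiffOn ℝ 2 g s) :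
    lap (fun y => f y - g y) x = lap f x - lap g x := by
  unfold lap
  rw [← Finset.sum_sub_distrib]
  refine Finset.sum_congr rfl fun k _ => ?_
  have h1 : ∀ y ∈ s, pd k (fun z => f z - g z) y = (fun z => pd k f z - pd k g z) y := by
    intro y hy
    exact pd_sub (diffAt_of_contDiffOn (n := 1) hs hf hy)
      (diffAt_of_contDiffOn (n := 1) hs hg hy) k
  rw [pd_congr hs hx h1 k]
  exact pd_sub (diffAt_of_contDiffOn (n := 0) hs (contDiffOn_pd (n := 1) hs hf k) hx)
    (diffAt_of_contDiffOn (n := 0) hs (contDiffOn_pd (n := 1) hs hg k) hx) k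

lemma lap_pd_comm {f : (Fin 3 → ℝ) → ℝ} {s : Set (Fin 3 → ℝ)} (hs : IsOpen s)
    {x : Fin 3 → ℝ} (hx : x ∈ s) (hf : ContDiffOn ℝ 3 f s) (a : Fin 3) :
    lap (pd a f) x = pd a (lap f) x := by
  have hf2 : ∀ y ∈ s, ContDiffAt ℝ 2 f y := fun y hy =>
    (hf.contDiffAt (hs.mem_nhds hy)).of_le (by norm_num)
  have step : ∀ k : Fin 3, pd k (pd k (pd a f)) x = pd a (pd k (pd k f)) x := by
    intro k
    have h1 : ∀ y ∈ s, pd k (pd a f) y = pd a (pd k f) y := fun y hy =>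
      pd_comm (hf2 y hy) k a
    rw [pd_congr hs hx h1 k]
    exact pd_comm ((contDiffOn_pd (n := 2) hs hf k).contDiffAt (hs.mem_nhds hx)) k a
  unfold lap
  rw [Finset.sum_congr rfl fun k _ => step k]
  rw [← pd_sum (fun k => diffAt_of_contDiffOn (n := 0) hs
    (contDiffOn_pd (n := 1) hs (contDiffOn_pd (n := 2) hs hf k) k) hx) a]

lemma key_symm
    (Ω : Set (Fin 3 → ℝ)) (hΩ : IsOpen Ω)
    (μ : ℝ)
    (lam : (Fin 3 → ℝ) → ℝ) (hlam : ContDiffOn ℝ 1 lam Ω)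
    (u : (Fin 3 → ℝ) → Fin 3 → ℝ) (hu : ContDiffOn ℝ 3 u Ω)
    (hsol : ∀ x ∈ Ω, ∀ i,
      μ * lapV u x i + (μ + lam x) * grad (vdiv u) x i + vdiv u x * grad lam x i = 0)
    {x : Fin 3 → ℝ} (hx : x ∈ Ω) (a b : Fin 3) :
    pd a (fun y => μ * lapV u y b) x = pd b (fun y => μ * lapV u y a) x := by
  set c : Fin 3 → (Fin 3 → ℝ) → ℝ := fun j y => μ * lapV u y j with hc_def
  have hU : ∀ j, ContDiffOn ℝ 3 (fun y => u y j) Ω := fun j =>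
    (ContinuousLinearMap.proj (R := ℝ) (φ := fun _ : Fin 3 => ℝ) j).contDiff.comp_contDiffOn hu
  have hlapc : ∀ j, ContDiffOn ℝ 1 (lap (fun z => u z j)) Ω := fun j =>
    ContDiffOn.sum fun k _ =>
      contDiffOn_pd (n := 1) hΩ (contDiffOn_pd (n := 2) hΩ (hU j) k) k
  have hc : ∀ j, ContDiffOn ℝ 1 (c j) Ω := fun j => contDiffOn_const.mul (hlapc j)
  set F : (Fin 3 → ℝ) → ℝ := fun y => (μ + lam y) * vdiv u y with hF_def
  have hdiv : ContDiffOn ℝ 2 (vdiv u) Ω :=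
    ContDiffOn.sum fun i _ => contDiffOn_pd (n := 2) hΩ (hU i) i
  have hF : ContDiffOn ℝ 1 F Ω :=
    (contDiffOn_const.add hlam).mul (hdiv.of_le (by norm_num))
  have pdF : ∀ y ∈ Ω, ∀ j, pd j F y = -(c j y) := by
    intro y hy j
    have hlamd : DifferentiableAt ℝ (fun z => μ + lam z) y :=
      (differentiableAt_const μ).add (diffAt_of_contDiffOn (n := 0) hΩ hlam hy)
    have hdivd : DifferentiableAt ℝ (vdiv u) y :=
      diffAt_of_contDiffOn (n := 1) hΩ hdiv hy
    have h1 : pd j F y = (μ + lam y) * pd j (vdiv u) y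
        + vdiv u y * pd j (fun z => μ + lam z) y := pd_mul hlamd hdivd j
    have h2 : pd j (fun z => μ + lam z) y = pd j lam y := by
      unfold pd; rw [fderiv_const_add]
    have h3 := hsol y hy j
    have h4 : grad (vdiv u) y j = pd j (vdiv u) y := rfl
    have h5 : grad lam y j = pd j lam y := rfl
    rw [h4, h5] at h3
    have h6 : c j y = μ * lapV u y j := rfl
    rw [h1, h2, h6]; linarith
  set f' : (Fin 3 → ℝ) → ((Fin 3 → ℝ) →L[ℝ] ℝ) :=
    fun y => ∑ j, (-(c j y)) • ContinuousLinearMap.proj (R := ℝ) (φ := fun _ : Fin 3 => ℝ) j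
    with hf'_def
  have hf'apply : ∀ y (j : Fin 3), f' y (Pi.single j 1) = -(c j y) := by
    intro y j
    simp [hf'_def, ContinuousLinearMap.proj_apply, Pi.single_apply]
  have hFd : ∀ y ∈ Ω, HasFDerivAt F (f' y) y := by
    intro y hy
    have hd : DifferentiableAt ℝ F y := diffAt_of_contDiffOn (n := 0) hΩ hF hy
    have hvec : ∀ (L : (Fin 3 → ℝ) →L[ℝ] ℝ) (j : Fin 3) (t : ℝ),
        L (Pi.single j t) = t * L (Pi.single j 1) := by
      intro L j t
      have hst : (Pi.single j t : Fin 3 → ℝ) = t • ((Pi.single j (1 : ℝ) : Fin 3 → ℝ)) := by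
        ext k; by_cases h : k = j <;> simp [Pi.single_apply, h]
      rw [hst, ContinuousLinearMap.map_smul, smul_eq_mul]
    have heq : fderiv ℝ F y = f' y := by
      apply ContinuousLinearMap.coe_injective
      apply LinearMap.pi_ext
      intro j t
      show (fderiv ℝ F y) (Pi.single j t) = (f' y) (Pi.single j t)
      have h0 : (fderiv ℝ F y) (Pi.single j 1) = pd j F y := rfl
      rw [hvec (fderiv ℝ F y) j t, hvec (f' y) j t, h0, pdF y hy j, hf'apply y j]
    rw [← heq]; exact hd.hasFDerivAt
  have hf'x : DifferentiableAt ℝ f' x := by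
    apply DifferentiableAt.fun_sum
    intro j _
    exact ((diffAt_of_contDiffOn (n := 0) hΩ (hc j) hx).neg).smul_const _
  have hsymm := second_derivative_symmetric_of_eventually
    (Filter.eventually_of_mem (hΩ.mem_nhds hx) hFd) hf'x.hasFDerivAt
  have final : ∀ p q : Fin 3,
      pd p (c q) x = -(fderiv ℝ f' x (Pi.single p 1) (Pi.single q 1)) := by
    intro p q
    have hcq : c q = fun y => -(f' y (Pi.single q 1)) := by
      funext y; rw [hf'apply y q]; ring
    rw [hcq, pd_neg]
    congr 1
    show fderiv ℝ (fun y => (f' y) (Pi.single q 1)) x (Pi.single p 1) = _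
    rw [fderiv_clm_apply hf'x (differentiableAt_const _)]
    simp
  show pd a (c b) x = pd b (c a) x
  rw [final a b, final b a, hsymm]

theorem curl_harmonic_of_lame_solution
    (Ω : Set (Fin 3 → ℝ)) (hΩ : IsOpen Ω)
    (μ : ℝ) (hμ : μ ≠ 0)
    (lam : (Fin 3 → ℝ) → ℝ) (hlam : ContDiffOn ℝ 1 lam Ω)
    (u : (Fin 3 → ℝ) → Fin 3 → ℝ) (hu : ContDiffOn ℝ 3 u Ω)
    (hsol : ∀ x ∈ Ω, ∀ i,
      μ * lapV u x i + (μ + lam x) * grad (vdiv u) x i + vdiv u x * grad lam x i = 0) :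
    ∀ x ∈ Ω, ∀ i, lap (fun y => curl u y i) x = 0 := by
  intro x hx i
  have hU : ∀ j, ContDiffOn ℝ 3 (fun y => u y j) Ω := fun j =>
    (ContinuousLinearMap.proj (R := ℝ) (φ := fun _ : Fin 3 => ℝ) j).contDiff.comp_contDiffOn hu
  have hpdU : ∀ p q : Fin 3, ContDiffOn ℝ 2 (pd p (fun y => u y q)) Ω := fun p q =>
    contDiffOn_pd (n := 2) hΩ (hU q) p
  have hlapd : ∀ j : Fin 3, DifferentiableAt ℝ (lap (fun z => u z j)) x := fun j =>
    diffAt_of_contDiffOn (n := 0) hΩ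
      (ContDiffOn.sum fun k _ =>
        contDiffOn_pd (n := 1) hΩ (contDiffOn_pd (n := 2) hΩ (hU j) k) k) hx
  have claim : ∀ a b : Fin 3,
      lap (fun y => pd a (fun z => u z b) y - pd b (fun z => u z a) y) x = 0 := by
    intro a b
    rw [lap_sub hΩ hx (hpdU a b) (hpdU b a),
      lap_pd_comm hΩ hx (hU b) a, lap_pd_comm hΩ hx (hU a) b]
    have hkey := key_symm Ω hΩ μ lam hlam u hu hsol hx a b
    have e1 : pd a (fun y => μ * lapV u y b) x = μ * pd a (lap (fun z => u z b)) x :=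
      pd_const_mul (hlapd b) μ a
    have e2 : pd b (fun y => μ * lapV u y a) x = μ * pd b (lap (fun z => u z a)) x :=
      pd_const_mul (hlapd a) μ b
    rw [e1, e2] at hkey
    have := mul_left_cancel₀ hμ hkey
    linarith
  fin_cases i
  · exact claim 1 2
  · exact claim 2 0
  · exact claim 0 1
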